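/- Let α, ᾱ be the complex conjugate roots of t³ − t − 1 and write α = |α| e^{iω} with ω ∈ (0, π). Then ω/π is irrational. -/

import Mathlib

private lemma noRatRoot (q : ℚ) : q ^ 3 ≠ q - 1 := by
  intro h
  have hden : (q.den : ℚ) ≠ 0 := by exact_mod_cast q.den_ne_zero
  have hq : (q.num : ℚ) / (q.den : ℚ) = q := Rat.num_div_den q
  rw [← hq] at h
  field_simp at h
  have key : (q.num : ℚ) ^ 3 = (q.num - q.den) * (q.den : ℚ) ^ 2 :=
    mul_right_cancel₀ hden (by linear_combination (q.den : ℚ) * h)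
  have keyZ : q.num ^ 3 = (q.num - q.den) * (q.den : ℤ) ^ 2 := by exact_mod_cast key
  have hdvd : (q.den : ℤ) ∣ q.num ^ 3 :=
    ⟨(q.num - q.den) * q.den, by linear_combination keyZ⟩
  have hcop : IsCoprime (q.den : ℤ) q.num := by
    rw [Int.isCoprime_iff_gcd_eq_one]
    simpa [Int.gcd, Nat.coprime_comm] using q.reduced
  have hcop3 : IsCoprime (q.den : ℤ) (q.num ^ 3) := hcop.pow_right
  have hunit : IsUnit (q.den : ℤ) := hcop3.isUnit_of_dvd hdvd
  have hd1 : q.den = 1 := by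
    rcases Int.isUnit_iff.mp hunit with h1 | h1
    · exact_mod_cast h1
    · omega
  have hm : q.num ^ 3 = q.num - 1 := by
    have hd : (q.den : ℤ) = 1 := by exact_mod_cast hd1
    rw [hd] at keyZ; linarith
  have hmdvd : q.num ∣ 1 := ⟨1 - q.num ^ 2, by linear_combination hm⟩
  rcases Int.isUnit_iff.mp (isUnit_of_dvd_one hmdvd) with h1 | h1 <;> rw [h1] at hm <;> omega

private def Fc : ℕ → ℤ × ℤ × ℤ
  | 0 => (1, 0, 0)
  | n + 1 => ((Fc n).2.2, (Fc n).1 + (Fc n).2.2, (Fc n).2.1)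

private lemma pow_rep (α : ℂ) (h : α ^ 3 = α + 1) (n : ℕ) :
    α ^ n = ((Fc n).1 : ℂ) + ((Fc n).2.1 : ℂ) * α + ((Fc n).2.2 : ℂ) * α ^ 2 := by
  induction n with
  | zero => simp [Fc]
  | succ n ih =>
    rw [pow_succ, ih, Fc]
    push_cast
    linear_combination ((Fc n).2.2 : ℂ) * h

theorem stmt_13 (α : ℂ) (hα : α ^ 3 - α - 1 = 0) (him : α.im ≠ 0)
    (ω : ℝ) (hω : ω ∈ Set.Ioo 0 Real.pi)
    (hαω : α = (‖α‖ : ℂ) * Complex.exp (ω * Complex.I)) :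
    Irrational (ω / Real.pi) := by
  by_contra hirr
  obtain ⟨r, hr⟩ := not_not.mp hirr
  have hπ : Real.pi ≠ 0 := Real.pi_ne_zero
  have hωr : ω = r * Real.pi := by
    field_simp at hr; linarith [hr]
  set n : ℕ := r.den with hn
  set k : ℤ := r.num with hk
  have hn0 : n ≠ 0 := r.den_ne_zero
  have hnω : (n : ℝ) * ω = (k : ℝ) * Real.pi := by
    have h1 : (r : ℝ) * (n : ℝ) = (k : ℝ) := by
      exact_mod_cast congrArg (Rat.cast (K := ℝ)) (Rat.mul_den_eq_num r)
    rw [hωr]; linear_combination Real.pi * h1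
  -- α^n is conj-invariant
  have hexp : Complex.exp (ω * Complex.I) ^ n = (-1 : ℂ) ^ k := by
    rw [← Complex.exp_nat_mul]
    have hc : (n : ℂ) * (ω * Complex.I) = (k : ℂ) * (Real.pi * Complex.I) := by
      have h2 : ((n : ℝ) * ω : ℂ) = ((k : ℝ) * Real.pi : ℂ) := by
        exact_mod_cast congrArg (Complex.ofReal) hnω
      push_cast at h2 ⊢
      linear_combination Complex.I * h2
    rw [hc, Complex.exp_int_mul, Complex.exp_pi_mul_I]
  have hx : α ^ n = ((‖α‖ : ℝ) : ℂ) ^ n * (-1 : ℂ) ^ k := by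
    conv_lhs => rw [hαω]
    rw [mul_pow, hexp]
  have hconj : (starRingEnd ℂ) (α ^ n) = α ^ n := by
    rw [hx]
    simp [map_zpow₀, map_pow]
  -- algebraic setup
  have h3cube : α ^ 3 = α + 1 := by linear_combination hα
  set β := (starRingEnd ℂ) α with hβdef
  have hβ3 : β ^ 3 - β - 1 = 0 := by
    have := congrArg (starRingEnd ℂ) hα
    simpa using this
  have hαβ : α - β ≠ 0 := by
    intro h
    exact him (Complex.conj_eq_iff_im.mp (by rw [← hβdef]; linear_combination -h))
  set a : ℤ := (Fc n).1 with ha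
  set b : ℤ := (Fc n).2.1 with hb
  set c : ℤ := (Fc n).2.2 with hc
  have hrep : α ^ n = (a : ℂ) + (b : ℂ) * α + (c : ℂ) * α ^ 2 := pow_rep α h3cube n
  have hrepc : α ^ n = (a : ℂ) + (b : ℂ) * β + (c : ℂ) * β ^ 2 := by
    conv_lhs => rw [← hconj, hrep]
    simp [map_add, map_mul, map_pow]
    rfl
  have heq : (a : ℂ) + b * α + c * α ^ 2 = (a : ℂ) + b * β + c * β ^ 2 := by
    rw [← hrep, ← hrepc]
  have hfac : (α - β) * ((b : ℂ) + c * (α + β)) = 0 := by linear_combination heq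
  have hbc : (b : ℂ) + c * (α + β) = 0 := by
    rcases mul_eq_zero.mp hfac with h | h
    · exact absurd h hαβ
    · exact h
  have h3' : α ^ 2 + α * β + β ^ 2 = 1 := by
    have hf2 : (α - β) * (α ^ 2 + α * β + β ^ 2 - 1) = 0 := by linear_combination hα - hβ3
    rcases mul_eq_zero.mp hf2 with h | h
    · exact absurd h hαβ
    · linear_combination h
  have hs3 : (α + β) ^ 3 = (α + β) - 1 := by
    linear_combination (-(1 : ℂ)/2) * hα + (-(1 : ℂ)/2) * hβ3 + (3 * (α + β)/2) * h3'
  rcases eq_or_ne c 0 with hc0 | hc0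
  · -- c = 0 : α^n is a nonzero integer, but |α| < 1
    have hb0 : (b : ℂ) = 0 := by
      rw [hc0] at hbc; push_cast at hbc; simpa using hbc
    have hpow : α ^ n = (a : ℂ) := by
      rw [hrep, hb0, hc0]; push_cast; ring
    have hα0 : α ≠ 0 := by
      intro h; rw [h] at hα; norm_num at hα
    have ha0 : a ≠ 0 := by
      intro h
      exact pow_ne_zero n hα0 (by rw [hpow, h]; norm_num)
    have hsu : α + β = ((2 * α.re : ℝ) : ℂ) := Complex.add_conj α
    have hu3 : (2 * α.re) ^ 3 = (2 * α.re) - 1 := by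
      rw [hsu] at hs3; exact_mod_cast hs3
    have hu2 : (2 * α.re) ^ 2 < 2 := by
      nlinarith [hu3, sq_nonneg (2 * α.re + 1), sq_nonneg (2 * α.re - 1), sq_nonneg (2 * α.re)]
    have hnsC : (Complex.normSq α : ℂ) = ((2 * α.re : ℝ) : ℂ) ^ 2 - 1 := by
      rw [← Complex.mul_conj, ← hβdef, ← hsu]
      linear_combination -h3'
    have hns : Complex.normSq α = (2 * α.re) ^ 2 - 1 := by exact_mod_cast hnsC
    have hlt1 : Complex.normSq α < 1 := by rw [hns]; linarith
    have hge0 : 0 ≤ Complex.normSq α := Complex.normSq_nonneg α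
    have hβpow : β ^ n = (a : ℂ) := by
      rw [hβdef, ← map_pow, hpow]
      simp
    have hsqC : (Complex.normSq α : ℂ) ^ n = (a : ℂ) ^ 2 := by
      rw [← Complex.mul_conj, ← hβdef, mul_pow, hpow, hβpow]; ring
    have hsq : (Complex.normSq α) ^ n = (a : ℝ) ^ 2 := by exact_mod_cast hsqC
    have h1le : (1 : ℝ) ≤ (a : ℝ) ^ 2 := by
      have : (1 : ℤ) ≤ a ^ 2 := by nlinarith [Int.one_le_abs ha0, sq_abs a]
      exact_mod_cast this
    have hlt : (Complex.normSq α) ^ n < 1 := pow_lt_one₀ hge0 hlt1 hn0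
    linarith
  · -- c ≠ 0 : the cubic has a rational root, contradiction
    have hcC : (c : ℂ) ≠ 0 := by exact_mod_cast hc0
    set q : ℚ := (-b : ℚ) / (c : ℚ) with hq
    have hsC : α + β = ((q : ℚ) : ℂ) := by
      rw [hq]; push_cast
      field_simp
      linear_combination hbc
    rw [hsC] at hs3
    have : q ^ 3 = q - 1 := by exact_mod_cast hs3
    exact noRatRoot q this
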